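/- Let d_A, d_B ≥ 1 and let |ψ⟩, |φ⟩ ∈ ℂ^{d_A}⊗ℂ^{d_B} be unit vectors, with reduced density matrices ρ = Tr_B(|ψ⟩⟨ψ|) and σ = Tr_B(|φ⟩⟨φ|). Let K = Tr_A(|ψ⟩⟨φ|) ∈ M_{d_B}(ℂ), fix a singular value decomposition K = U·Σ·V†, and set W = U·sgn(Σ)·V†, where sgn is applied entrywise to the diagonal of Σ. Then W†W is an orthogonal projection (i.e., W is a partial isometry), and ⟨ψ|(I_{d_A}⊗W)|φ⟩ = F(ρ,σ). -/

import Mathlib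

open scoped Matrix Kronecker ComplexOrder

/-- The operator (spectral) norm of a square complex matrix. -/
noncomputable def opNorm {n : Type*} [Fintype n] [DecidableEq n] (A : Matrix n n ℂ) : ℝ :=
  ‖Matrix.toEuclideanCLM (𝕜 := ℂ) A‖

/-- The square root of a positive semidefinite matrix (the removed `Matrix.PosSemidef.sqrt`,
with its old definition). -/
noncomputable def psdSqrt {n : Type*} [Fintype n] [DecidableEq n] {A : Matrix n n ℂ}
    (hA : A.PosSemidef) : Matrix n n ℂ :=
  hA.1.eigenvectorUnitary.1 * Matrix.diagonal ((↑) ∘ (√·) ∘ hA.1.eigenvalues) *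
    (star hA.1.eigenvectorUnitary : Matrix n n ℂ)

/-- The trace norm `‖A‖₁ = Tr √(Aᴴ A)` of a square complex matrix. -/
noncomputable def traceNorm {n : Type*} [Fintype n] [DecidableEq n] (A : Matrix n n ℂ) : ℝ :=
  ((psdSqrt (Matrix.posSemidef_conjTranspose_mul_self A)).trace).re

/-- The (square-root) fidelity `F(ρ,σ) = ‖√ρ √σ‖₁` of positive semidefinite matrices. -/
noncomputable def fidelity {n : Type*} [Fintype n] [DecidableEq n] {ρ σ : Matrix n n ℂ}
    (hρ : ρ.PosSemidef) (hσ : σ.PosSemidef) : ℝ :=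
  traceNorm (psdSqrt hρ * psdSqrt hσ)

/-- Functional calculus for a Hermitian matrix: `f(A) = Σ_i f(λ_i) |v_i⟩⟨v_i|`. -/
noncomputable def matFun {n : Type*} [Fintype n] [DecidableEq n] {A : Matrix n n ℂ}
    (hA : A.IsHermitian) (f : ℝ → ℝ) : Matrix n n ℂ :=
  (hA.eigenvectorUnitary : Matrix n n ℂ) *
    Matrix.diagonal (fun i => (f (hA.eigenvalues i) : ℂ)) *
    (star (hA.eigenvectorUnitary : Matrix n n ℂ))

/-- Partial trace over the first tensor factor. -/
noncomputable def ptraceA {a b : Type*} [Fintype a] (X : Matrix (a × b) (a × b) ℂ) :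
    Matrix b b ℂ :=
  Matrix.of fun i j => ∑ k, X (k, i) (k, j)

/-- Partial trace over the second tensor factor. -/
noncomputable def ptraceB {a b : Type*} [Fintype b] (X : Matrix (a × b) (a × b) ℂ) :
    Matrix a a ℂ :=
  Matrix.of fun i j => ∑ k, X (i, k) (j, k)

/-- The outer product `|ψ⟩⟨φ|`. -/
def outer {a : Type*} (ψ φ : a → ℂ) : Matrix a a ℂ :=
  Matrix.of fun i j => ψ i * (starRingEnd ℂ) (φ j)

/-- The Euclidean norm of a finitely supported complex vector. -/
noncomputable def evnorm {a : Type*} [Fintype a] (v : a → ℂ) : ℝ :=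
  Real.sqrt (∑ i, ‖v i‖ ^ 2)


namespace UhlmannAux
open Matrix Polynomial
open scoped ComplexOrder
variable {n : Type*} [Fintype n] [DecidableEq n]

noncomputable def uconj (U : Matrix.unitaryGroup n ℂ) : Matrix n n ℂ →ₐ[ℝ] Matrix n n ℂ where
  toFun M := (U : Matrix n n ℂ) * M * star (U : Matrix n n ℂ)
  map_one' := by simp [Matrix.mem_unitaryGroup_iff.mp U.2]
  map_mul' M N := by
    have h : star (U : Matrix n n ℂ) * (U : Matrix n n ℂ) = 1 :=
      Matrix.mem_unitaryGroup_iff'.mp U.2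
    calc (U : Matrix n n ℂ) * (M * N) * star (U : Matrix n n ℂ)
        = (U : Matrix n n ℂ) * M * (star (U : Matrix n n ℂ) * (U : Matrix n n ℂ)) * N *
            star (U : Matrix n n ℂ) := by rw [h]; noncomm_ring
      _ = ((U : Matrix n n ℂ) * M * star (U : Matrix n n ℂ)) *
            ((U : Matrix n n ℂ) * N * star (U : Matrix n n ℂ)) := by noncomm_ring
  map_zero' := by simp
  map_add' M N := by noncomm_ring
  commutes' r := by
    simp [Algebra.algebraMap_eq_smul_one, Matrix.mul_smul, Matrix.smul_mul,
      Matrix.mem_unitaryGroup_iff.mp U.2]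

lemma aeval_diagonal' (d : n → ℝ) (p : ℝ[X]) :
    aeval (Matrix.diagonal (fun i => (d i : ℂ))) p
      = Matrix.diagonal (fun i => ((p.eval (d i) : ℝ) : ℂ)) := by
  have h1 : Matrix.diagonal (fun i => (d i : ℂ))
      = Matrix.diagonalAlgHom ℝ (fun i => (d i : ℂ)) := rfl
  rw [h1, Polynomial.aeval_algHom_apply]
  have h2 : (aeval (fun i => (d i : ℂ)) p) = fun i => ((p.eval (d i) : ℝ) : ℂ) := by
    funext i
    have := Polynomial.aeval_algHom_apply (Pi.evalAlgHom ℝ (fun _ : n => ℂ) i)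
      (fun i => (d i : ℂ)) p
    have h4 : (aeval (fun i => (d i : ℂ)) p) i
        = aeval ((Pi.evalAlgHom ℝ (fun _ : n => ℂ) i) fun i => (d i : ℂ)) p := this.symm
    rw [h4]
    have h3 : ((Pi.evalAlgHom ℝ (fun _ : n => ℂ) i) fun i => (d i : ℂ))
        = Complex.ofRealAm (d i) := rfl
    rw [h3, Polynomial.aeval_algHom_apply, Polynomial.aeval_def]
    simp [Polynomial.eval₂_eq_eval_map]
  simp only [Matrix.diagonalAlgHom_apply, h2]

lemma spec' {A : Matrix n n ℂ} (hA : A.IsHermitian) :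
    A = (hA.eigenvectorUnitary : Matrix n n ℂ) * Matrix.diagonal (RCLike.ofReal ∘ hA.eigenvalues) *
      star (hA.eigenvectorUnitary : Matrix n n ℂ) := by
  conv_lhs => rw [hA.spectral_theorem]
  rw [Unitary.conjStarAlgAut_apply]

lemma aeval_eq_sqrt {A : Matrix n n ℂ} (hA : A.PosSemidef) (p : ℝ[X])
    (hp : ∀ i, p.eval (hA.1.eigenvalues i) = Real.sqrt (hA.1.eigenvalues i)) :
    aeval A p = (psdSqrt hA) := by
  conv_lhs => rw [spec' hA.1]
  have h1 : (hA.1.eigenvectorUnitary : Matrix n n ℂ) *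
      Matrix.diagonal (RCLike.ofReal ∘ hA.1.eigenvalues) *
      star (hA.1.eigenvectorUnitary : Matrix n n ℂ)
    = uconj hA.1.eigenvectorUnitary (Matrix.diagonal (fun i => ((hA.1.eigenvalues i : ℝ) : ℂ))) :=
    rfl
  rw [h1, Polynomial.aeval_algHom_apply, aeval_diagonal']
  rw [psdSqrt]
  simp only [uconj, AlgHom.coe_mk, RingHom.coe_mk, MonoidHom.coe_mk, OneHom.coe_mk]
  have h5 : (fun i => ((p.eval (hA.1.eigenvalues i) : ℝ) : ℂ))
      = ((↑) ∘ Real.sqrt ∘ hA.1.eigenvalues : n → ℂ) := by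
    funext i; simp [hp i]
  rw [h5]

lemma aeval_herm {A : Matrix n n ℂ} (hA : A.IsHermitian) (p : ℝ[X]) :
    aeval A p = (hA.eigenvectorUnitary : Matrix n n ℂ) *
      Matrix.diagonal (fun i => ((p.eval (hA.eigenvalues i) : ℝ) : ℂ)) *
      star (hA.eigenvectorUnitary : Matrix n n ℂ) := by
  conv_lhs => rw [spec' hA]
  have h1 : (hA.eigenvectorUnitary : Matrix n n ℂ) *
      Matrix.diagonal (RCLike.ofReal ∘ hA.eigenvalues) *
      star (hA.eigenvectorUnitary : Matrix n n ℂ)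
    = uconj hA.eigenvectorUnitary (Matrix.diagonal (fun i => ((hA.eigenvalues i : ℝ) : ℂ))) :=
    rfl
  rw [h1, Polynomial.aeval_algHom_apply, aeval_diagonal']
  rfl

lemma psdSqrt_mul_self {A : Matrix n n ℂ} (hA : A.PosSemidef) : psdSqrt hA * psdSqrt hA = A := by
  have hU : star (hA.1.eigenvectorUnitary : Matrix n n ℂ) *
      (hA.1.eigenvectorUnitary : Matrix n n ℂ) = 1 :=
    Matrix.mem_unitaryGroup_iff'.mp hA.1.eigenvectorUnitary.2
  conv_rhs => rw [spec' hA.1]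
  unfold psdSqrt
  calc _ = (hA.1.eigenvectorUnitary : Matrix n n ℂ) *
        (Matrix.diagonal ((↑) ∘ (√·) ∘ hA.1.eigenvalues) *
          (star (hA.1.eigenvectorUnitary : Matrix n n ℂ) * (hA.1.eigenvectorUnitary : Matrix n n ℂ)) *
          Matrix.diagonal ((↑) ∘ (√·) ∘ hA.1.eigenvalues)) *
        star (hA.1.eigenvectorUnitary : Matrix n n ℂ) := by simp only [Matrix.mul_assoc]
    _ = _ := by
      rw [hU, mul_one, Matrix.diagonal_mul_diagonal]
      refine congrArg (· * _) (congrArg (_ * ·) (congrArg Matrix.diagonal (funext fun i => ?_)))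
      simp only [Function.comp_apply]
      rw [← Complex.ofReal_mul, Real.mul_self_sqrt (hA.eigenvalues_nonneg i)]
      rfl

lemma posSemidef_psdSqrt {A : Matrix n n ℂ} (hA : A.PosSemidef) : (psdSqrt hA).PosSemidef := by
  unfold psdSqrt
  rw [Matrix.star_eq_conjTranspose]
  exact (Matrix.posSemidef_diagonal_iff.mpr fun i =>
    Complex.zero_le_real.mpr (Real.sqrt_nonneg _)).mul_mul_conjTranspose_same _

lemma eq_psdSqrt_of_sq_eq {A B : Matrix n n ℂ} (hB : B.PosSemidef) (hA : A.PosSemidef)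
    (h : B ^ 2 = A) : B = psdSqrt hA := by
  set T : Finset ℝ := (Finset.image hA.1.eigenvalues Finset.univ) ∪
    (Finset.image (fun i => hB.1.eigenvalues i ^ 2) Finset.univ) with hT
  set q : ℝ[X] := Lagrange.interpolate T id Real.sqrt with hq
  have hinj : Set.InjOn id (T : Set ℝ) := Function.injective_id.injOn
  have hev : ∀ x ∈ T, q.eval x = Real.sqrt x := fun x hx =>
    Lagrange.eval_interpolate_at_node Real.sqrt hinj hx
  rw [← aeval_eq_sqrt hA q (fun i => hev _ (Finset.mem_union_left _
    (Finset.mem_image_of_mem _ (Finset.mem_univ i))))]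
  rw [← h]
  have e : aeval (B ^ 2) q = aeval B (q.comp (X ^ 2)) := by
    rw [Polynomial.aeval_comp, map_pow, aeval_X]
  rw [e, aeval_herm hB.1]
  conv_lhs => rw [spec' hB.1]
  refine congrArg (· * _) (congrArg (_ * ·) (congrArg Matrix.diagonal (funext fun i => ?_)))
  simp only [Function.comp_apply]
  rw [Polynomial.eval_comp, Polynomial.eval_pow, Polynomial.eval_X,
    hev (hB.1.eigenvalues i ^ 2) (Finset.mem_union_right _
      (Finset.mem_image_of_mem (fun i => hB.1.eigenvalues i ^ 2) (Finset.mem_univ i))),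
    Real.sqrt_sq (hB.eigenvalues_nonneg i)]
  rfl

section aux
variable {n : Type*} [Fintype n] [DecidableEq n]

lemma trace_sqrt_eigsum {A : Matrix n n ℂ} (hA : A.PosSemidef) :
    (psdSqrt hA).trace = ((∑ i, Real.sqrt (hA.1.eigenvalues i) : ℝ) : ℂ) := by
  rw [psdSqrt, Matrix.trace_mul_comm, ← mul_assoc,
    Matrix.mem_unitaryGroup_iff'.mp hA.1.eigenvectorUnitary.2, one_mul, Matrix.trace_diagonal]
  push_cast
  rfl

lemma pow_intertwine {m : Type*} [Fintype m] [DecidableEq m]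
    (A : Matrix m n ℂ) (k : ℕ) : A * (Aᴴ * A) ^ k = (A * Aᴴ) ^ k * A := by
  induction k with
  | zero => simp
  | succ k ih =>
      rw [pow_succ, pow_succ, ← Matrix.mul_assoc, ih]
      simp only [Matrix.mul_assoc]

lemma aeval_intertwine {m : Type*} [Fintype m] [DecidableEq m]
    (A : Matrix m n ℂ) (q : ℝ[X]) :
    A * (aeval (Aᴴ * A) q) = (aeval (A * Aᴴ) q) * A := by
  induction q using Polynomial.induction_on' with
  | add p q hp hq => simp only [map_add, Matrix.mul_add, Matrix.add_mul, hp, hq]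
  | monomial k a =>
      simp only [Polynomial.aeval_monomial, Algebra.algebraMap_eq_smul_one]
      rw [smul_one_mul, smul_one_mul, Matrix.mul_smul, Matrix.smul_mul, pow_intertwine]

lemma trace_sqrt_comm {m : Type*} [Fintype m] [DecidableEq m] (A : Matrix m n ℂ) :
    (psdSqrt (Matrix.posSemidef_conjTranspose_mul_self A)).trace
      = (psdSqrt (Matrix.posSemidef_self_mul_conjTranspose A)).trace := by
  set hP := Matrix.posSemidef_conjTranspose_mul_self A with hPdef
  set hQ := Matrix.posSemidef_self_mul_conjTranspose A with hQdef
  set T : Finset ℝ := insert 0 ((Finset.image hP.1.eigenvalues Finset.univ)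
    ∪ (Finset.image hQ.1.eigenvalues Finset.univ)) with hT
  set p : ℝ[X] := Lagrange.interpolate T id Real.sqrt with hp
  have hinj : Set.InjOn id (T : Set ℝ) := Function.injective_id.injOn
  have hev : ∀ x ∈ T, p.eval x = Real.sqrt x := by
    intro x hx
    exact Lagrange.eval_interpolate_at_node Real.sqrt hinj hx
  have h0 : p.eval 0 = 0 := by
    rw [hev 0 (Finset.mem_insert_self _ _), Real.sqrt_zero]
  have hXdvd : X ∣ p := Polynomial.X_dvd_iff.mpr
    (by rwa [Polynomial.coeff_zero_eq_eval_zero])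
  obtain ⟨q, hq⟩ := hXdvd
  have e1 : aeval (Aᴴ * A) p = (psdSqrt hP) := by
    refine aeval_eq_sqrt hP p fun i => hev _ ?_
    exact Finset.mem_insert_of_mem (Finset.mem_union_left _
      (Finset.mem_image_of_mem _ (Finset.mem_univ i)))
  have e2 : aeval (A * Aᴴ) p = (psdSqrt hQ) := by
    refine aeval_eq_sqrt hQ p fun i => hev _ ?_
    exact Finset.mem_insert_of_mem (Finset.mem_union_right _
      (Finset.mem_image_of_mem _ (Finset.mem_univ i)))
  rw [← e1, ← e2, hq, _root_.map_mul, _root_.map_mul, aeval_X, aeval_X]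
  rw [Matrix.mul_assoc, aeval_intertwine, ← Matrix.mul_assoc, Matrix.trace_mul_comm,
    ← Matrix.mul_assoc, Matrix.trace_mul_comm]

lemma sqrt_congr {A B : Matrix n n ℂ} (h : A = B) (hA : A.PosSemidef) (hB : B.PosSemidef) :
    (psdSqrt hA) = (psdSqrt hB) := by subst h; rfl

lemma sqrt_transpose {A : Matrix n n ℂ} (hA : A.PosSemidef) :
    (psdSqrt (hA.transpose)) = ((psdSqrt hA))ᵀ := by
  refine (eq_psdSqrt_of_sq_eq (posSemidef_psdSqrt hA).transpose hA.transpose ?_).symm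
  rw [pow_two, ← Matrix.transpose_mul, psdSqrt_mul_self hA]

end aux


section svd
variable {n : Type*} [Fintype n] [DecidableEq n]
open Matrix

lemma svd_conj_mul (U V : Matrix n n ℂ) (hU : U ∈ Matrix.unitaryGroup n ℂ) (d e : n → ℝ) :
    (U * Matrix.diagonal (fun i => (d i : ℂ)) * Vᴴ)ᴴ *
      (U * Matrix.diagonal (fun i => (e i : ℂ)) * Vᴴ)
    = V * Matrix.diagonal (fun i => ((d i * e i : ℝ) : ℂ)) * Vᴴ := by
  have hU' : Uᴴ * U = 1 := by
    rw [← Matrix.star_eq_conjTranspose]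
    exact Matrix.mem_unitaryGroup_iff'.mp hU
  rw [Matrix.conjTranspose_mul, Matrix.conjTranspose_mul, Matrix.conjTranspose_conjTranspose,
    Matrix.diagonal_conjTranspose]
  have hd : star (Complex.ofReal ∘ d) = fun i => (d i : ℂ) := by
    funext i; simp [Complex.conj_ofReal]
  calc V * (Matrix.diagonal (star (Complex.ofReal ∘ d)) * Uᴴ) *
        (U * Matrix.diagonal (fun i => (e i : ℂ)) * Vᴴ)
      = V * (Matrix.diagonal (fun i => (d i : ℂ)) * (Uᴴ * U) *
          Matrix.diagonal (fun i => (e i : ℂ))) * Vᴴ := by rw [hd]; noncomm_ring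
    _ = V * Matrix.diagonal (fun i => ((d i * e i : ℝ) : ℂ)) * Vᴴ := by
        rw [hU', mul_one, Matrix.diagonal_mul_diagonal]
        push_cast
        rfl

lemma trace_conj_diag (V : Matrix n n ℂ) (hV : V ∈ Matrix.unitaryGroup n ℂ) (d : n → ℝ) :
    (V * Matrix.diagonal (fun i => (d i : ℂ)) * Vᴴ).trace = ((∑ i, d i : ℝ) : ℂ) := by
  have hV' : Vᴴ * V = 1 := by
    rw [← Matrix.star_eq_conjTranspose]
    exact Matrix.mem_unitaryGroup_iff'.mp hV
  rw [Matrix.trace_mul_comm, ← Matrix.mul_assoc, hV', one_mul, Matrix.trace_diagonal]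
  push_cast
  rfl

end svd

section entries
open Matrix
variable {dA dB : ℕ}

lemma sum3_comm {α β γ M : Type*} [AddCommMonoid M] [Fintype α] [Fintype β] [Fintype γ]
    (f : α → β → γ → M) :
    ∑ a, ∑ b, ∑ c, f a b c = ∑ c, ∑ b, ∑ a, f a b c :=
  calc ∑ a, ∑ b, ∑ c, f a b c
      = ∑ a, ∑ c, ∑ b, f a b c := Finset.sum_congr rfl fun _ _ => Finset.sum_comm
    _ = ∑ c, ∑ a, ∑ b, f a b c := Finset.sum_comm
    _ = ∑ c, ∑ b, ∑ a, f a b c := Finset.sum_congr rfl fun _ _ => Finset.sum_comm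

lemma lhs_eq_trace (ψ φ : Fin dA × Fin dB → ℂ) (W : Matrix (Fin dB) (Fin dB) ℂ) :
    star ψ ⬝ᵥ (((1 : Matrix (Fin dA) (Fin dA) ℂ) ⊗ₖ W) *ᵥ φ)
      = ((ptraceA (outer ψ φ))ᴴ * W).trace := by
  simp only [dotProduct, Matrix.mulVec, Matrix.trace, Matrix.diag_apply, Matrix.mul_apply,
    Matrix.conjTranspose_apply, ptraceA, outer, Matrix.of_apply, Matrix.kroneckerMap_apply,
    Matrix.one_apply, Pi.star_apply, Fintype.sum_prod_type, RCLike.star_def, ite_mul, one_mul,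
    zero_mul, Finset.sum_ite_eq, Finset.mem_univ, if_true, map_sum, _root_.map_mul,
    Complex.conj_conj, Finset.mul_sum, Finset.sum_mul, mul_ite, mul_zero, Finset.sum_ite_irrel,
    Finset.sum_const_zero]
  rw [show ∀ (g : Fin dB → Fin dB → Fin dA → ℂ), ∑ x : Fin dB, ∑ x1 : Fin dB, ∑ i : Fin dA,
      g x x1 i = ∑ i, ∑ x1, ∑ x, g x x1 i from fun g => sum3_comm (fun a b c => g a b c)]
  refine Finset.sum_congr rfl fun a _ => Finset.sum_congr rfl fun b _ =>
    Finset.sum_congr rfl fun b' _ => ?_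
  ring

lemma mulconj_eq_ptraceB (ψ : Fin dA × Fin dB → ℂ) :
    (Matrix.of fun a b => ψ (a, b)) * (Matrix.of fun a b => ψ (a, b))ᴴ = ptraceB (outer ψ ψ) := by
  ext a a'
  simp [Matrix.mul_apply, Matrix.conjTranspose_apply, ptraceB, outer]

lemma KhK_eq (ψ φ : Fin dA × Fin dB → ℂ) :
    (ptraceA (outer ψ φ))ᴴ * (ptraceA (outer ψ φ))
      = ((Matrix.of fun a b => φ (a, b))ᴴ * (ptraceB (outer ψ ψ)) *
          (Matrix.of fun a b => φ (a, b)))ᵀ := by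
  ext i j
  simp only [Matrix.mul_apply, Matrix.conjTranspose_apply, Matrix.transpose_apply, ptraceA,
    ptraceB, outer, Matrix.of_apply, RCLike.star_def, map_sum, _root_.map_mul, Complex.conj_conj,
    Finset.mul_sum, Finset.sum_mul]
  rw [show ∀ (g : Fin dB → Fin dA → Fin dA → ℂ), ∑ b : Fin dB, ∑ a : Fin dA, ∑ a' : Fin dA,
      g b a a' = ∑ a', ∑ a, ∑ b, g b a a' from fun g => sum3_comm g]
  refine Finset.sum_congr rfl fun a _ => Finset.sum_congr rfl fun b _ =>
    Finset.sum_congr rfl fun c _ => ?_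
  ring

end entries
end UhlmannAux

/-- Explicit Uhlmann partial isometry: for unit vectors `ψ, φ` on `ℂ^{d_A}⊗ℂ^{d_B}` with reduced
states `ρ = Tr_B |ψ⟩⟨ψ|`, `σ = Tr_B |φ⟩⟨φ|`, and `K = Tr_A |ψ⟩⟨φ|` with singular value
decomposition `K = U Σ V†`, the operator `W = U sgn(Σ) V†` is a partial isometry and
`⟨ψ|(I⊗W)|φ⟩ = F(ρ,σ)`. -/
theorem uhlmann_explicit (dA dB : ℕ) (hdA : 1 ≤ dA) (hdB : 1 ≤ dB)
    (ψ φ : Fin dA × Fin dB → ℂ) (hψ : evnorm ψ = 1) (hφ : evnorm φ = 1)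
    (ρ σ : Matrix (Fin dA) (Fin dA) ℂ)
    (hρdef : ρ = ptraceB (outer ψ ψ)) (hσdef : σ = ptraceB (outer φ φ))
    (K : Matrix (Fin dB) (Fin dB) ℂ) (hKdef : K = ptraceA (outer ψ φ))
    (U V : Matrix (Fin dB) (Fin dB) ℂ)
    (hU : U ∈ Matrix.unitaryGroup (Fin dB) ℂ) (hV : V ∈ Matrix.unitaryGroup (Fin dB) ℂ)
    (s : Fin dB → ℝ) (hs : ∀ i, 0 ≤ s i)
    (hSVD : K = U * Matrix.diagonal (fun i => (s i : ℂ)) * Vᴴ)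
    (W : Matrix (Fin dB) (Fin dB) ℂ)
    (hW : W = U * Matrix.diagonal (fun i => (Real.sign (s i) : ℂ)) * Vᴴ) :
    (Wᴴ * W) * (Wᴴ * W) = Wᴴ * W ∧ (Wᴴ * W).IsHermitian ∧
      ∀ (hρ : ρ.PosSemidef) (hσ : σ.PosSemidef),
        star ψ ⬝ᵥ (((1 : Matrix (Fin dA) (Fin dA) ℂ) ⊗ₖ W) *ᵥ φ) = (fidelity hρ hσ : ℂ) := by
  open Matrix UhlmannAux in
  have hsign2 : ∀ x : ℝ, (Real.sign x) * (Real.sign x) * ((Real.sign x) * (Real.sign x))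
      = (Real.sign x) * (Real.sign x) := by
    intro x
    rcases Real.sign_apply_eq x with h | h | h <;> rw [h] <;> norm_num
  have hWW : Wᴴ * W
      = V * Matrix.diagonal (fun i => ((Real.sign (s i) * Real.sign (s i) : ℝ) : ℂ)) * Vᴴ := by
    rw [hW]; exact svd_conj_mul U V hU _ _
  have hVV : Vᴴ * V = 1 := by
    rw [← Matrix.star_eq_conjTranspose]; exact Matrix.mem_unitaryGroup_iff'.mp hV
  refine ⟨?_, ?_, ?_⟩
  · rw [hWW]
    calc (V * Matrix.diagonal (fun i => ((Real.sign (s i) * Real.sign (s i) : ℝ) : ℂ)) * Vᴴ) *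
          (V * Matrix.diagonal (fun i => ((Real.sign (s i) * Real.sign (s i) : ℝ) : ℂ)) * Vᴴ)
        = V * (Matrix.diagonal (fun i => ((Real.sign (s i) * Real.sign (s i) : ℝ) : ℂ)) *
            (Vᴴ * V) * Matrix.diagonal (fun i => ((Real.sign (s i) * Real.sign (s i) : ℝ) : ℂ)))
            * Vᴴ := by noncomm_ring
      _ = V * Matrix.diagonal (fun i => ((Real.sign (s i) * Real.sign (s i) : ℝ) : ℂ)) * Vᴴ := by
          rw [hVV, mul_one, Matrix.diagonal_mul_diagonal]
          have : (fun i => ((Real.sign (s i) * Real.sign (s i) : ℝ) : ℂ) *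
              ((Real.sign (s i) * Real.sign (s i) : ℝ) : ℂ))
              = fun i => ((Real.sign (s i) * Real.sign (s i) : ℝ) : ℂ) := by
            funext i
            rw [← Complex.ofReal_mul, hsign2 (s i)]
          rw [this]
  · exact (Matrix.posSemidef_conjTranspose_mul_self W).1
  · intro hρ hσ
    have hN : (Matrix.of fun a b => φ (a, b)) * (Matrix.of fun a b => φ (a, b))ᴴ = σ := by
      rw [hσdef]; exact mulconj_eq_ptraceB φ
    have hKNM : Kᴴ * K = ((Matrix.of fun a b => φ (a, b))ᴴ * ρ * (Matrix.of fun a b => φ (a, b)))ᵀ := by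
      rw [hKdef, hρdef]; exact KhK_eq ψ φ
    set N : Matrix (Fin dA) (Fin dB) ℂ := Matrix.of fun a b => φ (a, b) with hNdef
    have hsρ : (psdSqrt hρ) * (psdSqrt hρ) = ρ := psdSqrt_mul_self hρ
    have hsσ : (psdSqrt hσ) * (psdSqrt hσ) = σ := psdSqrt_mul_self hσ
    have hρh : ((psdSqrt hρ))ᴴ = (psdSqrt hρ) := (posSemidef_psdSqrt hρ).1
    have hσh : ((psdSqrt hσ))ᴴ = (psdSqrt hσ) := (posSemidef_psdSqrt hσ).1
    have hYeq : ((psdSqrt hρ) * N)ᴴ * ((psdSqrt hρ) * N) = Nᴴ * ρ * N := by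
      rw [Matrix.conjTranspose_mul, hρh, Matrix.mul_assoc, ← Matrix.mul_assoc (psdSqrt hρ), hsρ,
        ← Matrix.mul_assoc]
    have hY : (Nᴴ * ρ * N).PosSemidef := hYeq ▸ Matrix.posSemidef_conjTranspose_mul_self _
    have hPK := Matrix.posSemidef_conjTranspose_mul_self K
    have hG := Matrix.posSemidef_conjTranspose_mul_self ((psdSqrt hρ) * (psdSqrt hσ))
    have c1 : (psdSqrt hPK).trace = (psdSqrt hY).trace := by
      rw [sqrt_congr hKNM hPK hY.transpose, sqrt_transpose hY, Matrix.trace_transpose]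
    have c2 : (psdSqrt hY).trace
        = (psdSqrt (Matrix.posSemidef_self_mul_conjTranspose ((psdSqrt hρ) * N))).trace := by
      rw [← sqrt_congr hYeq (Matrix.posSemidef_conjTranspose_mul_self _) hY]
      exact trace_sqrt_comm _
    have hBB : ((psdSqrt hρ) * N) * ((psdSqrt hρ) * N)ᴴ
        = ((psdSqrt hσ) * (psdSqrt hρ))ᴴ * ((psdSqrt hσ) * (psdSqrt hρ)) := by
      rw [Matrix.conjTranspose_mul, hρh, Matrix.conjTranspose_mul, hρh, hσh]
      rw [Matrix.mul_assoc, ← Matrix.mul_assoc N, hN]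
      rw [mul_assoc, ← mul_assoc (psdSqrt hσ), hsσ, ← mul_assoc]
    have c3 : (psdSqrt (Matrix.posSemidef_self_mul_conjTranspose ((psdSqrt hρ) * N))).trace
        = (psdSqrt (Matrix.posSemidef_conjTranspose_mul_self ((psdSqrt hσ) * (psdSqrt hρ)))).trace := by
      rw [sqrt_congr hBB (Matrix.posSemidef_self_mul_conjTranspose _)
        (Matrix.posSemidef_conjTranspose_mul_self _)]
    have c4 := trace_sqrt_comm ((psdSqrt hσ) * (psdSqrt hρ))
    have hCC : ((psdSqrt hσ) * (psdSqrt hρ)) * ((psdSqrt hσ) * (psdSqrt hρ))ᴴ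
        = ((psdSqrt hρ) * (psdSqrt hσ))ᴴ * ((psdSqrt hρ) * (psdSqrt hσ)) := by
      rw [Matrix.conjTranspose_mul, hρh, hσh, Matrix.conjTranspose_mul, hρh, hσh]
    have c5 : (psdSqrt (Matrix.posSemidef_self_mul_conjTranspose ((psdSqrt hσ) * (psdSqrt hρ)))).trace
        = (psdSqrt hG).trace := by
      exact congrArg Matrix.trace (sqrt_congr hCC (Matrix.posSemidef_self_mul_conjTranspose _) hG)
    -- SVD side
    have hKK2 : Kᴴ * K = V * Matrix.diagonal (fun i => ((s i * s i : ℝ) : ℂ)) * Vᴴ := by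
      rw [hSVD]; exact svd_conj_mul U V hU s s
    have hsq : V * Matrix.diagonal (fun i => (s i : ℂ)) * Vᴴ = (psdSqrt hPK) := by
      refine eq_psdSqrt_of_sq_eq ?_ hPK ?_
      · exact (Matrix.posSemidef_diagonal_iff.mpr fun i =>
          Complex.zero_le_real.mpr (hs i)).mul_mul_conjTranspose_same V
      · rw [pow_two, hKK2]
        calc (V * Matrix.diagonal (fun i => (s i : ℂ)) * Vᴴ) *
              (V * Matrix.diagonal (fun i => (s i : ℂ)) * Vᴴ)
            = V * (Matrix.diagonal (fun i => (s i : ℂ)) * (Vᴴ * V) *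
                Matrix.diagonal (fun i => (s i : ℂ))) * Vᴴ := by noncomm_ring
          _ = V * Matrix.diagonal (fun i => ((s i * s i : ℝ) : ℂ)) * Vᴴ := by
              rw [hVV, mul_one, Matrix.diagonal_mul_diagonal]
              push_cast
              rfl
    have tK : (psdSqrt hPK).trace = ((∑ i, s i : ℝ) : ℂ) := by
      rw [← hsq]; exact trace_conj_diag V hV s
    -- trace of Kᴴ W
    have hKW : Kᴴ * W = V * Matrix.diagonal (fun i => ((s i * Real.sign (s i) : ℝ) : ℂ)) * Vᴴ := by
      rw [hSVD, hW]; exact svd_conj_mul U V hU _ _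
    have hss : ∀ i, s i * Real.sign (s i) = s i := by
      intro i
      rcases (hs i).eq_or_lt with h | h
      · rw [← h, zero_mul]
      · rw [Real.sign_of_pos h, mul_one]
    have tKW : (Kᴴ * W).trace = ((∑ i, s i : ℝ) : ℂ) := by
      rw [hKW, trace_conj_diag V hV]
      exact congrArg Complex.ofReal (Finset.sum_congr rfl fun i _ => hss i)
    have hlhs : star ψ ⬝ᵥ (((1 : Matrix (Fin dA) (Fin dA) ℂ) ⊗ₖ W) *ᵥ φ) = (Kᴴ * W).trace := by
      rw [hKdef]; exact lhs_eq_trace ψ φ W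
    have e := trace_sqrt_eigsum hG
    have hfid : ((fidelity hρ hσ : ℝ) : ℂ) = (psdSqrt hG).trace := by
      have h1 : fidelity hρ hσ = ((psdSqrt hG).trace).re := rfl
      rw [h1, e, Complex.ofReal_re]
    rw [hlhs, tKW, hfid, ← c5, ← c4, ← c3, ← c2, ← c1, tK]
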